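/- For every n ≥ 1 and prime p, Σ_{k=0}^{∞} f_n(p^k) x^k = ∏_{j=0}^{n-1} 1/(1 − p^j x) as formal power series, where f_n(p^k) is the number of subgroups of index p^k in ℤ^n. -/

import Mathlib

/-- The number of sublattices (subgroups) of index `m` in `ℤ^n`. -/
noncomputable def sublatticeCount (n m : ℕ) : ℕ :=
  Nat.card {H : AddSubgroup (Fin n → ℤ) // H.index = m}

open AddSubgroup

variable {A : Type*} [AddCommGroup A]

/-- The subgroup of `A × ℤ` determined by `a : ℕ`, `K ≤ A`, and a coset `q : A ⧸ K`. -/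
def Hsub (a : ℕ) (K : AddSubgroup A) (q : A ⧸ K) : AddSubgroup (A × ℤ) where
  carrier := {x | ∃ s : ℤ, x.2 = s * a ∧ (x.1 : A ⧸ K) = s • q}
  zero_mem' := ⟨0, by simp⟩
  add_mem' := by
    rintro ⟨x, t⟩ ⟨y, u⟩ ⟨s, hs1, hs2⟩ ⟨r, hr1, hr2⟩
    dsimp only at hs1 hs2 hr1 hr2
    refine ⟨s + r, ?_, ?_⟩
    · show t + u = _
      rw [hs1, hr1, add_mul]
    · show ((x + y : A) : A ⧸ K) = _
      rw [QuotientAddGroup.mk_add, hs2, hr2, add_smul]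
  neg_mem' := by
    rintro ⟨x, t⟩ ⟨s, hs1, hs2⟩
    dsimp only at hs1 hs2
    refine ⟨-s, ?_, ?_⟩
    · show -t = _
      rw [hs1, neg_mul]
    · show ((-x : A) : A ⧸ K) = _
      rw [QuotientAddGroup.mk_neg, hs2, neg_smul]

lemma mem_Hsub {a : ℕ} {K : AddSubgroup A} {q : A ⧸ K} {x : A × ℤ} :
    x ∈ Hsub a K q ↔ ∃ s : ℤ, x.2 = s * a ∧ (x.1 : A ⧸ K) = s • q := Iff.rfl

lemma index_Hsub (a : ℕ) (ha : a ≠ 0) (K : AddSubgroup A) (q : A ⧸ K) :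
    (Hsub a K q).index = K.index * a := by
  have ha' : (a : ℤ) ≠ 0 := Int.natCast_ne_zero.2 ha
  set M : AddSubgroup (A × ℤ) := (⊤ : AddSubgroup A).prod (zmultiples (a : ℤ)) with hMdef
  have hle : Hsub a K q ≤ M := by
    rintro ⟨x, t⟩ ⟨s, h1, h2⟩
    exact ⟨mem_top _, mem_zmultiples_iff.2 ⟨s, by simpa [smul_eq_mul] using h1.symm⟩⟩
  have hdvd : ∀ y : M, (a : ℤ) ∣ (y : A × ℤ).2 := by
    rintro ⟨⟨x, t⟩, hx⟩
    obtain ⟨k, hk⟩ := mem_zmultiples_iff.1 hx.2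
    exact ⟨k, by simpa [smul_eq_mul, mul_comm] using hk.symm⟩
  have hM : M.index = a := by
    rw [hMdef, AddSubgroup.index_prod, index_top, one_mul, Int.index_zmultiples,
      Int.natAbs_natCast]
  let φ : M →+ A ⧸ K :=
    { toFun := fun y => ((y : A × ℤ).1 : A ⧸ K) - ((y : A × ℤ).2 / a) • q
      map_zero' := by simp
      map_add' := by
        rintro y z
        have h1 := hdvd y
        have h2 := hdvd z
        have : ((y + z : M) : A × ℤ).2 / a = (y : A × ℤ).2 / a + (z : A × ℤ).2 / a := by
          show ((y : A × ℤ).2 + (z : A × ℤ).2) / (a : ℤ) = _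
          rw [Int.add_ediv_of_dvd_left h1]
        show ((((y : A × ℤ).1 + (z : A × ℤ).1 : A)) : A ⧸ K) - _ • q = _
        rw [QuotientAddGroup.mk_add, this, add_smul]
        abel_nf }
  have hsurj : Function.Surjective φ := by
    intro q'
    obtain ⟨x, rfl⟩ := QuotientAddGroup.mk_surjective q'
    refine ⟨⟨(x, 0), mem_top _, zero_mem _⟩, ?_⟩
    show ((x : A ⧸ K)) - ((0 : ℤ) / a) • q = _
    simp
  have hker : φ.ker = (Hsub a K q).addSubgroupOf M := by
    ext y
    obtain ⟨⟨x, t⟩, hx⟩ := y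
    simp only [AddMonoidHom.mem_ker, AddSubgroup.mem_addSubgroupOf]
    show ((x : A ⧸ K)) - (t / a) • q = 0 ↔ (x, t) ∈ Hsub a K q
    rw [sub_eq_zero, mem_Hsub]
    constructor
    · intro h
      exact ⟨t / a, by rw [Int.ediv_mul_cancel (hdvd ⟨(x, t), hx⟩)], h⟩
    · rintro ⟨s, h1, h2⟩
      dsimp only at h1
      have : t / (a : ℤ) = s := by rw [h1, Int.mul_ediv_cancel _ ha']
      rw [this]; exact h2
  have h1 : (Hsub a K q).relIndex M = K.index := by
    show ((Hsub a K q).addSubgroupOf M).index = K.index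
    rw [← hker]
    show Nat.card (M ⧸ φ.ker) = Nat.card (A ⧸ K)
    exact Nat.card_congr (QuotientAddGroup.quotientKerEquivOfSurjective φ hsurj).toEquiv
  rw [← AddSubgroup.relIndex_mul_index hle, h1, hM]

variable (A) in
/-- The sigma type classifying finite-index subgroups of `A × ℤ`. -/
abbrev SigT (m : ℕ) : Type _ :=
  Σ (x : {ab : ℕ × ℕ // ab.1 * ab.2 = m}) (K : {K : AddSubgroup A // K.index = x.1.2}),
    A ⧸ K.1

variable (A) in
def classifyFun {m : ℕ} (hm : m ≠ 0) (y : SigT A m) :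
    {H : AddSubgroup (A × ℤ) // H.index = m} :=
  ⟨Hsub y.1.1.1 y.2.1.1 y.2.2, by
    have ha : y.1.1.1 ≠ 0 := by
      intro h
      exact hm (by simpa [h] using y.1.2.symm)
    rw [index_Hsub _ ha, y.2.1.2, mul_comm]
    exact y.1.2⟩

lemma classifyFun_bijective {m : ℕ} (hm : m ≠ 0) :
    Function.Bijective (classifyFun A hm) := by
  constructor
  · rintro ⟨⟨⟨a, b⟩, hab⟩, ⟨K, hK⟩, q⟩ ⟨⟨⟨a', b'⟩, hab'⟩, ⟨K', hK'⟩, q'⟩ heq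
    have h : Hsub a K q = Hsub a' K' q' := congrArg Subtype.val heq
    have ha : a ≠ 0 := fun h0 => hm (by simpa [h0] using hab.symm)
    have ha' : a' ≠ 0 := fun h0 => hm (by simpa [h0] using hab'.symm)
    -- a = a'
    have hmem : ∀ (a₀ : ℕ) (K₀ : AddSubgroup A) (q₀ : A ⧸ K₀),
        ((q₀.out, (a₀ : ℤ)) : A × ℤ) ∈ Hsub a₀ K₀ q₀ := by
      intro a₀ K₀ q₀
      exact ⟨1, by simp, by simp [QuotientAddGroup.out_eq']⟩
    have haa : a = a' := by
      have h1 := h ▸ hmem a K q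
      have h2 := h.symm ▸ hmem a' K' q'
      obtain ⟨s, hs, -⟩ := h1
      obtain ⟨r, hr, -⟩ := h2
      dsimp only at hs hr
      have d1 : (a' : ℤ) ∣ (a : ℤ) := ⟨s, by rw [hs]; ring⟩
      have d2 : (a : ℤ) ∣ (a' : ℤ) := ⟨r, by rw [hr]; ring⟩
      exact_mod_cast Int.dvd_antisymm (by positivity) (by positivity) d2 d1
    subst haa
    -- K = K'
    have hKmem : ∀ (K₀ : AddSubgroup A) (q₀ : A ⧸ K₀) (x : A),
        ((x, (0 : ℤ)) : A × ℤ) ∈ Hsub a K₀ q₀ ↔ x ∈ K₀ := by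
      intro K₀ q₀ x
      constructor
      · rintro ⟨s, h1, h2⟩
        have hs0 : s = 0 := by
          have : (a : ℤ) ≠ 0 := Int.natCast_ne_zero.2 ha
          rcases mul_eq_zero.1 h1.symm with h | h
          · exact h
          · exact absurd h this
        subst hs0
        simpa [QuotientAddGroup.eq_zero_iff] using h2
      · intro hx
        exact ⟨0, by simp, by simpa [QuotientAddGroup.eq_zero_iff] using hx⟩
    have hKK : K = K' := by
      ext x
      rw [← hKmem K q x, h, hKmem K' q' x]
    subst hKK
    have hbb : b = b' := hK.symm.trans hK'
    subst hbb
    -- q = q'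
    have hqq : q = q' := by
      have h1 := h ▸ hmem a K q
      obtain ⟨s, hs, hsq⟩ := h1
      dsimp only at hs
      have hs1 : s = 1 := by
        have : (a : ℤ) ≠ 0 := Int.natCast_ne_zero.2 ha
        have := mul_right_cancel₀ this (by rw [← hs, one_mul] : s * (a:ℤ) = 1 * a)
        simpa using this
      subst hs1
      rw [QuotientAddGroup.out_eq'] at hsq
      simpa using hsq
    subst hqq
    rfl
  · rintro ⟨H, hH⟩
    -- the image of H in ℤ
    obtain ⟨g, hg⟩ := Int.subgroup_cyclic (H.map (AddMonoidHom.snd A ℤ))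
    rw [← AddSubgroup.zmultiples_eq_closure] at hg
    set a : ℕ := g.natAbs with hadef
    have hg' : H.map (AddMonoidHom.snd A ℤ) = AddSubgroup.zmultiples (a : ℤ) := by
      rw [hg, hadef, Int.zmultiples_natAbs]
    have hmfin : H.index ≠ 0 := hH ▸ hm
    have ha : a ≠ 0 := by
      intro h0
      have h1 : ((0 : A), (m : ℤ)) ∈ H := by
        have := AddSubgroup.nsmul_index_mem H ((0 : A), (1 : ℤ))
        rw [hH] at this
        simpa using this
      have h2 : (m : ℤ) ∈ H.map (AddMonoidHom.snd A ℤ) :=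
        AddSubgroup.mem_map.2 ⟨_, h1, rfl⟩
      rw [hg', h0] at h2
      simp only [Nat.cast_zero, AddSubgroup.mem_zmultiples_iff, smul_zero] at h2
      obtain ⟨k, hk⟩ := h2
      exact hm (by exact_mod_cast hk.symm)
    set K : AddSubgroup A := H.comap (AddMonoidHom.inl A ℤ) with hKdef
    have hav : ∃ v : A, ((v, (a : ℤ)) : A × ℤ) ∈ H := by
      have : (a : ℤ) ∈ H.map (AddMonoidHom.snd A ℤ) := by
        rw [hg']
        exact AddSubgroup.mem_zmultiples _
      obtain ⟨⟨v, t⟩, hv, ht⟩ := AddSubgroup.mem_map.1 this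
      exact ⟨v, by rwa [show t = (a : ℤ) from ht] at hv⟩
    obtain ⟨v, hv⟩ := hav
    have Heq : H = Hsub a K ((v : A ⧸ K)) := by
      ext ⟨x, t⟩
      constructor
      · intro hx
        have ht : t ∈ AddSubgroup.zmultiples ((a : ℤ)) := by
          rw [← hg']
          exact AddSubgroup.mem_map.2 ⟨_, hx, rfl⟩
        obtain ⟨s, hs⟩ := AddSubgroup.mem_zmultiples_iff.1 ht
        rw [smul_eq_mul] at hs
        refine ⟨s, hs.symm, ?_⟩
        have hsub : ((x - s • v, (0 : ℤ)) : A × ℤ) ∈ H := by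
          have h2 : ((s • v, s * (a : ℤ)) : A × ℤ) ∈ H := by
            have := AddSubgroup.zsmul_mem H hv s
            simpa [smul_eq_mul] using this
          have := AddSubgroup.sub_mem H hx h2
          simpa [hs, Prod.ext_iff] using this
        have hxk : x - s • v ∈ K := hsub
        show ((x : A ⧸ K)) = s • ((v : A ⧸ K))
        rw [← QuotientAddGroup.mk_zsmul, QuotientAddGroup.eq_iff_sub_mem]
        exact hxk
      · rintro ⟨s, h1, h2⟩
        have hxv : x - s • v ∈ K := by
          rw [← QuotientAddGroup.eq_zero_iff]
          have : ((x - s • v : A) : A ⧸ K) = (x : A ⧸ K) - s • (v : A ⧸ K) := by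
            rw [QuotientAddGroup.mk_sub, QuotientAddGroup.mk_zsmul]
          rw [this, h2, sub_self]
        have h3 : ((x - s • v, (0 : ℤ)) : A × ℤ) ∈ H := hxv
        have h4 : ((s • v, s * (a : ℤ)) : A × ℤ) ∈ H := by
          have := AddSubgroup.zsmul_mem H hv s
          simpa [smul_eq_mul] using this
        have h5 := AddSubgroup.add_mem H h3 h4
        dsimp only at h1
        have h6 : (x, t) = ((x - s • v, (0 : ℤ)) + (s • v, s * (a : ℤ))) := by
          simp [Prod.ext_iff, h1]
        rw [h6]
        exact h5
    refine ⟨⟨⟨(a, K.index), ?_⟩, ⟨K, rfl⟩, (v : A ⧸ K)⟩, ?_⟩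
    · rw [mul_comm, ← index_Hsub a ha K (v : A ⧸ K), ← Heq, hH]
    · exact Subtype.ext Heq.symm

def divEquiv (m : ℕ) (hm : m ≠ 0) :
    {ab : ℕ × ℕ // ab.1 * ab.2 = m} ≃ {d : ℕ // d ∈ m.divisors} where
  toFun x := ⟨x.1.2, Nat.mem_divisors.2 ⟨Dvd.intro_left _ x.2, hm⟩⟩
  invFun d := ⟨(m / d.1, d.1), Nat.div_mul_cancel (Nat.mem_divisors.1 d.2).1⟩
  left_inv := by
    rintro ⟨⟨a, b⟩, hab⟩
    have hb : b ≠ 0 := fun h => hm (by simpa [h] using hab.symm)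
    refine Subtype.ext (Prod.ext ?_ rfl)
    show m / b = a
    rw [← hab, Nat.mul_div_cancel _ (Nat.pos_of_ne_zero hb)]
  right_inv := by rintro ⟨d, hd⟩; rfl

lemma card_prod_int (m : ℕ) (hm : m ≠ 0)
    (hfin : ∀ b : ℕ, b ≠ 0 → Finite {K : AddSubgroup A // K.index = b}) :
    Nat.card {H : AddSubgroup (A × ℤ) // H.index = m} =
      ∑ d ∈ m.divisors, Nat.card {K : AddSubgroup A // K.index = d} * d := by
  classical
  have hdvd : ∀ x : {ab : ℕ × ℕ // ab.1 * ab.2 = m}, x.1.2 ≠ 0 :=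
    fun x h => hm (by simpa [h] using x.2.symm)
  letI F1 : Fintype {ab : ℕ × ℕ // ab.1 * ab.2 = m} :=
    Fintype.ofEquiv _ (divEquiv m hm).symm
  letI F2 : ∀ x : {ab : ℕ × ℕ // ab.1 * ab.2 = m},
      Fintype {K : AddSubgroup A // K.index = x.1.2} :=
    fun x => @Fintype.ofFinite _ (hfin _ (hdvd x))
  letI F3 : ∀ (x : {ab : ℕ × ℕ // ab.1 * ab.2 = m})
      (K : {K : AddSubgroup A // K.index = x.1.2}), Fintype (A ⧸ K.1) :=
    fun x K => @Fintype.ofFinite _ (Nat.finite_of_card_ne_zero (by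
      show Nat.card (A ⧸ K.1) ≠ 0
      have : K.1.index = x.1.2 := K.2
      rw [show Nat.card (A ⧸ K.1) = K.1.index from rfl, this]
      exact hdvd x))
  rw [← Nat.card_eq_of_bijective _ (classifyFun_bijective (A := A) hm)]
  rw [Nat.card_eq_fintype_card, Fintype.card_sigma]
  have step1 : ∀ x : {ab : ℕ × ℕ // ab.1 * ab.2 = m},
      Fintype.card ((K : {K : AddSubgroup A // K.index = x.1.2}) × A ⧸ K.1) =
        Nat.card {K : AddSubgroup A // K.index = x.1.2} * x.1.2 := by
    intro x
    rw [Fintype.card_sigma]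
    have h2 : ∀ K : {K : AddSubgroup A // K.index = x.1.2},
        Fintype.card (A ⧸ K.1) = x.1.2 := by
      intro K
      rw [← Nat.card_eq_fintype_card]
      exact K.2
    rw [Finset.sum_congr rfl (fun K _ => h2 K), Finset.sum_const, Finset.card_univ,
      smul_eq_mul, Nat.card_eq_fintype_card]
  rw [Finset.sum_congr rfl (fun x _ => step1 x)]
  rw [← Finset.sum_coe_sort m.divisors
    (fun d => Nat.card {K : AddSubgroup A // K.index = d} * d)]
  exact Fintype.sum_equiv (divEquiv m hm) _ _ (fun x => rfl)

lemma finite_sigT (m : ℕ) (hm : m ≠ 0)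
    (hfin : ∀ b : ℕ, b ≠ 0 → Finite {K : AddSubgroup A // K.index = b}) :
    Finite (SigT A m) := by
  have hdvd : ∀ x : {ab : ℕ × ℕ // ab.1 * ab.2 = m}, x.1.2 ≠ 0 :=
    fun x h => hm (by simpa [h] using x.2.symm)
  letI F1 : Fintype {ab : ℕ × ℕ // ab.1 * ab.2 = m} :=
    Fintype.ofEquiv _ (divEquiv m hm).symm
  letI F2 : ∀ x : {ab : ℕ × ℕ // ab.1 * ab.2 = m},
      Fintype {K : AddSubgroup A // K.index = x.1.2} :=
    fun x => @Fintype.ofFinite _ (hfin _ (hdvd x))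
  letI F3 : ∀ (x : {ab : ℕ × ℕ // ab.1 * ab.2 = m})
      (K : {K : AddSubgroup A // K.index = x.1.2}), Fintype (A ⧸ K.1) :=
    fun x K => @Fintype.ofFinite _ (Nat.finite_of_card_ne_zero (by
      show Nat.card (A ⧸ K.1) ≠ 0
      have : K.1.index = x.1.2 := K.2
      rw [show Nat.card (A ⧸ K.1) = K.1.index from rfl, this]
      exact hdvd x))
  infer_instance

/-- Transport of subgroup-with-index subtypes along an `AddEquiv`. -/
def subgroupIndexEquiv {G G' : Type*} [AddGroup G] [AddGroup G'] (e : G ≃+ G') (m : ℕ) :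
    {H : AddSubgroup G // H.index = m} ≃ {H : AddSubgroup G' // H.index = m} where
  toFun H := ⟨H.1.comap (e.symm : G' →+ G),
    by rw [AddSubgroup.index_comap_of_surjective _ e.symm.surjective, H.2]⟩
  invFun H := ⟨H.1.comap (e : G →+ G'),
    by rw [AddSubgroup.index_comap_of_surjective _ e.surjective, H.2]⟩
  left_inv H := by
    refine Subtype.ext ?_
    ext x
    simp [AddSubgroup.mem_comap]
  right_inv H := by
    refine Subtype.ext ?_
    ext x
    simp [AddSubgroup.mem_comap]

/-- `Fin (n+1) → ℤ` is `(Fin n → ℤ) × ℤ`. -/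
def prodAddEquiv (n : ℕ) : (Fin (n + 1) → ℤ) ≃+ (Fin n → ℤ) × ℤ where
  toFun f := (fun i => f i.castSucc, f (Fin.last n))
  invFun x := Fin.snoc x.1 x.2
  left_inv f := Fin.snoc_init_self f
  right_inv x := by
    refine Prod.ext (funext fun i => ?_) ?_
    · simp
    · simp
  map_add' f g := rfl

lemma addSubgroup_pi_zero_eq_top (H : AddSubgroup (Fin 0 → ℤ)) : H = ⊤ := by
  ext x
  simp only [AddSubgroup.mem_top, iff_true]
  rw [Subsingleton.elim x 0]
  exact H.zero_mem

lemma finite_sublattices : ∀ n m : ℕ, m ≠ 0 →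
    Finite {H : AddSubgroup (Fin n → ℤ) // H.index = m} := by
  intro n
  induction n with
  | zero =>
    intro m hm
    have : Subsingleton {H : AddSubgroup (Fin 0 → ℤ) // H.index = m} :=
      ⟨fun a b => Subtype.ext ((addSubgroup_pi_zero_eq_top a.1).trans
        (addSubgroup_pi_zero_eq_top b.1).symm)⟩
    exact Finite.of_subsingleton
  | succ n ih =>
    intro m hm
    have e1 := subgroupIndexEquiv (prodAddEquiv n) m
    have e2 := Equiv.ofBijective _ (classifyFun_bijective (A := Fin n → ℤ) hm)
    have : Finite (SigT (Fin n → ℤ) m) := finite_sigT m hm ih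
    exact Finite.of_equiv _ (e2.trans e1.symm)

lemma sublatticeCount_succ (n m : ℕ) (hm : m ≠ 0) :
    sublatticeCount (n + 1) m = ∑ d ∈ m.divisors, sublatticeCount n d * d := by
  unfold sublatticeCount
  rw [Nat.card_congr (subgroupIndexEquiv (prodAddEquiv n) m)]
  exact card_prod_int m hm (fun b hb => finite_sublattices n b hb)

lemma sublatticeCount_zero (m : ℕ) : sublatticeCount 0 m = if m = 1 then 1 else 0 := by
  have hsub := addSubgroup_pi_zero_eq_top
  have hidx : ∀ H : AddSubgroup (Fin 0 → ℤ), H.index = 1 :=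
    fun H => AddSubgroup.index_eq_one.2 (hsub H)
  unfold sublatticeCount
  split_ifs with h
  · subst h
    haveI : Nonempty {H : AddSubgroup (Fin 0 → ℤ) // H.index = 1} := ⟨⟨⊤, hidx ⊤⟩⟩
    haveI : Subsingleton {H : AddSubgroup (Fin 0 → ℤ) // H.index = 1} :=
      ⟨fun a b => Subtype.ext ((hsub a.1).trans (hsub b.1).symm)⟩
    exact Nat.card_unique
  · haveI : IsEmpty {H : AddSubgroup (Fin 0 → ℤ) // H.index = m} := by
      refine ⟨fun H => h ?_⟩
      rw [← H.2, hidx H.1]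
    exact Nat.card_of_isEmpty

lemma rescale_one_sub (a c : ℤ) :
    PowerSeries.rescale a (1 - PowerSeries.C (R := ℤ) c * PowerSeries.X) =
      1 - PowerSeries.C (R := ℤ) (a * c) * PowerSeries.X := by
  ext k
  simp only [map_sub, PowerSeries.coeff_rescale, PowerSeries.coeff_one,
    PowerSeries.coeff_C_mul, PowerSeries.coeff_X]
  rcases k with _ | _ | k <;> simp

lemma gen_fun (p : ℕ) (hp : p.Prime) (n : ℕ) :
    (PowerSeries.mk fun k => (sublatticeCount n (p ^ k) : ℤ)) *
      ∏ j ∈ Finset.range n, (1 - PowerSeries.C (R := ℤ) ((p : ℤ) ^ j) * PowerSeries.X) = 1 := by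
  induction n with
  | zero =>
    rw [Finset.range_zero, Finset.prod_empty, mul_one]
    ext k
    rw [PowerSeries.coeff_mk, PowerSeries.coeff_one, sublatticeCount_zero]
    rcases eq_or_ne k 0 with rfl | hk
    · simp
    · rw [if_neg hk, if_neg, Nat.cast_zero]
      intro h
      exact (Nat.one_lt_pow hk hp.one_lt).ne' h
  | succ n ih =>
    have hp0 : p ≠ 0 := hp.pos.ne'
    have hrec : ∀ k : ℕ, (sublatticeCount (n + 1) (p ^ k) : ℤ) =
        ∑ i ∈ Finset.range (k + 1), (sublatticeCount n (p ^ i) : ℤ) * (p : ℤ) ^ i := by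
      intro k
      rw [sublatticeCount_succ n (p ^ k) (pow_ne_zero k hp0),
        Nat.sum_divisors_prime_pow hp]
      push_cast
      rfl
    have hA : (PowerSeries.mk fun k => (sublatticeCount (n + 1) (p ^ k) : ℤ)) *
        (1 - PowerSeries.X) =
        PowerSeries.rescale (p : ℤ)
          (PowerSeries.mk fun k => (sublatticeCount n (p ^ k) : ℤ)) := by
      ext k
      rw [PowerSeries.coeff_rescale, PowerSeries.coeff_mk, mul_sub, mul_one, map_sub,
        PowerSeries.coeff_mk]
      cases k with
      | zero =>
        rw [PowerSeries.coeff_zero_mul_X]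
        have h00 := hrec 0
        simp only [pow_zero, Finset.range_one, Finset.sum_singleton, mul_one] at h00
        simp [pow_zero, h00]
      | succ k =>
        rw [PowerSeries.coeff_succ_mul_X, PowerSeries.coeff_mk, hrec (k + 1), hrec k,
          Finset.sum_range_succ]
        ring
    have hresc : ∀ j : ℕ, (1 - PowerSeries.C (R := ℤ) ((p : ℤ) ^ (j + 1)) * PowerSeries.X) =
        PowerSeries.rescale (p : ℤ) (1 - PowerSeries.C (R := ℤ) ((p : ℤ) ^ j) * PowerSeries.X) := by
      intro j
      rw [rescale_one_sub, ← pow_succ']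
    rw [Finset.prod_range_succ']
    have h0 : (1 - PowerSeries.C (R := ℤ) ((p : ℤ) ^ 0) * PowerSeries.X) =
        1 - PowerSeries.X := by
      rw [pow_zero, map_one, one_mul]
    rw [h0, mul_comm (∏ j ∈ Finset.range n,
      (1 - PowerSeries.C (R := ℤ) ((p : ℤ) ^ (j + 1)) * PowerSeries.X)) (1 - PowerSeries.X),
      ← mul_assoc, hA, Finset.prod_congr rfl (fun j _ => hresc j), ← map_prod, ← map_mul,
      ih, map_one]


/-- `Σ_{k≥0} f_n(p^k) x^k = ∏_{j=0}^{n-1} 1/(1 - p^j x)` in `ℤ[[x]]`: equivalently,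
the product of the generating series with `∏_{j=0}^{n-1} (1 - p^j x)` is `1`. -/
theorem sublattice_count_prime_pow_generating_function (n p : ℕ) (hn : 1 ≤ n)
    (hp : p.Prime) :
    (PowerSeries.mk fun k => (sublatticeCount n (p ^ k) : ℤ)) *
        ∏ j ∈ Finset.range n, (1 - PowerSeries.C (R := ℤ) ((p : ℤ) ^ j) * PowerSeries.X) = 1 :=
  gen_fun p hp n
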